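/- Let p = 2 and let C ⊆ F_{2^m}^N be an additive code with Construction A lattice Λ(C) ⊆ R^{Nm} (scaling 1/√2) and symmetric unimodular integer Gram matrix g with entries w_{i,t,j,s}. Then Λ(C) is even with respect to b(λ,λ') = λ g λ'^T if and only if for every codeword c ∈ C, Σ_{i,t,j,s} ι(c_{i,t}) ι(c_{j,s}) w_{i,t,j,s} ∈ 4Z. -/

import Mathlib

open scoped BigOperators

noncomputable section

/-- Construction A lattice of an additive code over `F_{2^m}`: expand codeword coordinates
in the basis `e`, lift the `F_2`-coefficients to integers, and scale by `1/√2`. -/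
def latticeF (m N : ℕ)
    (e : Module.Basis (Fin m) (ZMod 2) (GaloisField 2 m))
    (C : Set (Fin N → GaloisField 2 m)) : Set (Fin N × Fin m → ℝ) :=
  { lam | ∃ c ∈ C, ∃ l : Fin N × Fin m → ℤ, ∀ x : Fin N × Fin m,
      lam x = (((e.repr (c x.1) x.2).val : ℝ) + 2 * l x) / Real.sqrt 2 }

/-- Bilinear form on `ℝ^{Nm}` given by an integer Gram matrix `g`. -/
def bForm {N m : ℕ} (g : Matrix (Fin N × Fin m) (Fin N × Fin m) ℤ)
    (lam lam' : Fin N × Fin m → ℝ) : ℝ :=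
  ∑ x, ∑ y, lam x * (g x y : ℝ) * lam' y

private lemma sumswap {N m : ℕ} (g : Matrix (Fin N × Fin m) (Fin N × Fin m) ℤ)
    (hg : g.IsSymm) (r l : Fin N × Fin m → ℤ) :
    ∑ x, ∑ y, l x * r y * g x y = ∑ x, ∑ y, r x * l y * g x y := by
  rw [Finset.sum_comm]
  refine Finset.sum_congr rfl fun x _ => Finset.sum_congr rfl fun y _ => ?_
  rw [hg.apply x y]; ring

private lemma expand_sum {N m : ℕ} (g : Matrix (Fin N × Fin m) (Fin N × Fin m) ℤ)
    (hg : g.IsSymm) (r l : Fin N × Fin m → ℤ) :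
    ∑ x, ∑ y, (r x + 2*l x)*(r y + 2*l y)*g x y
      = (∑ x, ∑ y, r x * r y * g x y)
        + 4 * ((∑ x, ∑ y, r x * l y * g x y) + ∑ x, ∑ y, l x * l y * g x y) := by
  have h : ∀ x y : Fin N × Fin m, (r x + 2*l x)*(r y + 2*l y)*g x y
      = r x * r y * g x y + 2*(r x * l y * g x y) + 2*(l x * r y * g x y)
        + 4*(l x * l y * g x y) := by intros; ring
  simp_rw [h, Finset.sum_add_distrib, ← Finset.mul_sum]
  rw [sumswap g hg r l]; ring

private lemma bForm_eval {N m : ℕ} (g : Matrix (Fin N × Fin m) (Fin N × Fin m) ℤ)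
    (r l : Fin N × Fin m → ℤ) (lam : Fin N × Fin m → ℝ)
    (hl : ∀ x, lam x = ((r x : ℝ) + 2 * l x) / Real.sqrt 2) :
    bForm g lam lam
      = ((∑ x, ∑ y, (r x + 2*l x)*(r y + 2*l y)*g x y : ℤ) : ℝ) / 2 := by
  have h2 : Real.sqrt 2 * Real.sqrt 2 = 2 := Real.mul_self_sqrt (by norm_num)
  have key : ∀ a b gg : ℝ, (a / Real.sqrt 2) * gg * (b / Real.sqrt 2) = a * b * gg / 2 := by
    intro a b gg
    have hs : Real.sqrt 2 ≠ 0 := by positivity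
    field_simp

    rw [Real.sq_sqrt (by norm_num : (0:ℝ) ≤ 2)]; ring
  unfold bForm
  simp_rw [hl, key]
  push_cast
  rw [Finset.sum_div]
  exact Finset.sum_congr rfl fun x _ => by rw [Finset.sum_div]

example : True := trivial

theorem latticeF_even_iff_p_two (m N : ℕ)
    (e : Module.Basis (Fin m) (ZMod 2) (GaloisField 2 m))
    (C : AddSubgroup (Fin N → GaloisField 2 m))
    (g : Matrix (Fin N × Fin m) (Fin N × Fin m) ℤ)
    (hg_symm : g.IsSymm) (hg_uni : IsUnit g.det) :
    (∀ lam ∈ latticeF m N e (C : Set _), ∃ z : ℤ, bForm g lam lam = 2 * z) ↔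
      (∀ c ∈ C, (4 : ℤ) ∣
        ∑ x : Fin N × Fin m, ∑ y : Fin N × Fin m,
          ((e.repr (c x.1) x.2).val : ℤ) * ((e.repr (c y.1) y.2).val : ℤ) * g x y) := by
  constructor
  · intro h c hc
    set r : Fin N × Fin m → ℤ := fun x => ((e.repr (c x.1) x.2).val : ℤ) with hr
    set lam : Fin N × Fin m → ℝ :=
      fun x => (((e.repr (c x.1) x.2).val : ℝ) + 2 * ((0 : ℤ) : ℝ)) / Real.sqrt 2 with hlam
    obtain ⟨z, hz⟩ := h lam ⟨c, hc, 0, fun x => rfl⟩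
    have hb := bForm_eval g r 0 lam (by intro x; rw [hlam]; simp only [hr, Pi.zero_apply]; push_cast; ring)
    rw [hb] at hz
    have hz2 : ((∑ x, ∑ y, (r x + 2*((0:Fin N × Fin m → ℤ) x))*(r y + 2*(0:Fin N × Fin m → ℤ) y)*g x y : ℤ) : ℝ) = 4 * z := by
      linarith
    have hz3 : (∑ x, ∑ y, (r x + 2*((0:Fin N × Fin m → ℤ) x))*(r y + 2*(0:Fin N × Fin m → ℤ) y)*g x y) = 4 * z := by
      exact_mod_cast hz2
    refine ⟨z, ?_⟩
    simpa [hr] using hz3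
  · intro h lam hlam
    obtain ⟨c, hc, l, hl⟩ := hlam
    set r : Fin N × Fin m → ℤ := fun x => ((e.repr (c x.1) x.2).val : ℤ) with hr
    have hb := bForm_eval g r l lam (by intro x; rw [hl x]; simp only [hr, Pi.zero_apply]; push_cast; ring)
    obtain ⟨k, hk⟩ := h c hc
    rw [expand_sum g hg_symm r l] at hb
    refine ⟨k + ((∑ x, ∑ y, r x * l y * g x y) + ∑ x, ∑ y, l x * l y * g x y), ?_⟩
    rw [hb, hk]
    push_cast
    ring

end
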